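/- Let X_N be exchangeable {0,1}-valued with γ = ΣX_i having a distribution symmetric about N/2. If γ is tighter than the Binomial(N,1/2), i.e., P(γ=i)/P(γ=i-1) > (N-i+1)/i for all 1 ≤ i ≤ ⌊N/2⌋, then for the first-success time M = min{i ≤ N : X_i = 1}, one has P(M = m | M ≥ m) > 1/2 for every m = 2,...,N. -/
import Mathlib

open Finset

/-- number of 1's (trues) in a 0-1 vector -/
def cnt {n : ℕ} (x : Fin n → Bool) : ℕ := (Finset.univ.filter fun i => x i = true).card

/-- P(γ = k): probability that the total count of 1's equals k -/
def gam (N : ℕ) (p : (Fin N → Bool) → ℝ) (k : ℕ) : ℝ :=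
  ∑ y : Fin N → Bool, if cnt y = k then p y else 0

/-- P(X_1 = x_1, ..., X_n = x_n): probability of observing the prefix x -/
def pref (N : ℕ) (p : (Fin N → Bool) → ℝ) {n : ℕ} (hn : n ≤ N) (x : Fin n → Bool) : ℝ :=
  ∑ y : Fin N → Bool, if (∀ i : Fin n, y (Fin.castLE hn i) = x i) then p y else 0

theorem exch_const {N : ℕ} (p : (Fin N → Bool) → ℝ)
    (hexch : ∀ σ : Equiv.Perm (Fin N), ∀ y : Fin N → Bool, p (y ∘ σ) = p y)
    {y z : Fin N → Bool} (h : cnt y = cnt z) : p y = p z := by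
  have hc1 : Fintype.card {a : Fin N // z a = true} = Fintype.card {a : Fin N // y a = true} := by
    rw [Fintype.card_subtype, Fintype.card_subtype]; exact h.symm
  have hc2 : Fintype.card {a : Fin N // ¬ z a = true} = Fintype.card {a : Fin N // ¬ y a = true} := by
    rw [Fintype.card_subtype, Fintype.card_subtype]
    have h1 := Finset.card_filter_add_card_filter_not (s := (univ : Finset (Fin N)))
      (p := fun a => z a = true)
    have h2 := Finset.card_filter_add_card_filter_not (s := (univ : Finset (Fin N)))
      (p := fun a => y a = true)
    have := h
    unfold cnt at this
    omega
  let e := Fintype.equivOfCardEq hc1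
  let f := Fintype.equivOfCardEq hc2
  let σ : Equiv.Perm (Fin N) := Equiv.subtypeCongr e f
  have key : y ∘ σ = z := by
    funext i
    by_cases hi : z i = true
    · have : σ i = (e ⟨i, hi⟩ : Fin N) := by simp [σ, Equiv.subtypeCongr, hi]
      simp only [Function.comp_apply, this]
      have := (e ⟨i, hi⟩).prop
      rw [this, hi]
    · have : σ i = (f ⟨i, hi⟩ : Fin N) := by simp [σ, Equiv.subtypeCongr, hi]
      simp only [Function.comp_apply, this]
      have h2 := (f ⟨i, hi⟩).prop
      simp only [Bool.not_eq_true] at h2 hi ⊢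
      rw [h2, hi]
  rw [← key, hexch]

theorem card_count (N n k : ℕ) (hn : n ≤ N) :
    (univ.filter fun y : Fin N → Bool =>
      (∀ i : Fin n, y (Fin.castLE hn i) = false) ∧ cnt y = k).card = (N - n).choose k := by
  have hT : (univ.filter fun i : Fin N => n ≤ i.val).card = N - n := by
    have h1 := Finset.card_filter_add_card_filter_not (s := (univ : Finset (Fin N)))
      (p := fun i : Fin N => n ≤ i.val)
    have h2 : (univ.filter fun i : Fin N => ¬ n ≤ i.val).card = n := by
      rw [Finset.card_eq_of_bijective (n := n) (f := fun j hj => (⟨j, by omega⟩ : Fin N))]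
      · intro a ha
        simp only [mem_filter, mem_univ, true_and, not_le] at ha
        exact ⟨a.val, ha, Fin.ext rfl⟩
      · intro j hj; simp only [mem_filter, mem_univ, true_and, not_le]; exact hj
      · intro i j hi hj hij
        exact congrArg Fin.val hij
    simp only [card_univ, Fintype.card_fin] at h1
    omega
  rw [← hT, ← Finset.card_powersetCard]
  refine Finset.card_bij' (fun y _ => univ.filter (fun i => y i = true))
    (fun s _ => fun i => decide (i ∈ s)) ?_ ?_ ?_ ?_
  · intro y hy
    simp only [mem_filter, mem_univ, true_and] at hy
    rw [Finset.mem_powersetCard]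
    constructor
    · intro i hi
      simp only [mem_filter, mem_univ, true_and] at hi ⊢
      by_contra hni
      have hlt : i.val < n := by omega
      have := hy.1 ⟨i.val, hlt⟩
      have hcast : Fin.castLE hn ⟨i.val, hlt⟩ = i := Fin.ext rfl
      rw [hcast] at this
      rw [this] at hi; exact Bool.false_ne_true hi
    · exact hy.2
  · intro s hs
    rw [Finset.mem_powersetCard] at hs
    simp only [mem_filter, mem_univ, true_and]
    constructor
    · intro i
      have : ¬ ((Fin.castLE hn i) ∈ s) := by
        intro hmem
        have := hs.1 hmem
        simp only [mem_filter, mem_univ, true_and] at this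
        have hv : (Fin.castLE hn i).val = i.val := rfl
        have := i.isLt
        omega
      simp [this]
    · unfold cnt
      rw [← hs.2]
      congr 1
      ext i; simp
  · intro y hy; funext i
    by_cases h : y i = true <;> simp [h]
  · intro s hs; ext i; simp

theorem choose_inc (n : ℕ) : ∀ l k : ℕ, k ≤ l → 2*l ≤ n+1 → Nat.choose n k ≤ Nat.choose n l := by
  intro l
  induction l with
  | zero =>
    intro k hk _
    simp [Nat.le_zero.mp hk]
  | succ l ih =>
    intro k hk hl
    rcases Nat.eq_or_lt_of_le hk with h | h
    · rw [h]
    · have hkl : k ≤ l := by omega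
      refine le_trans (ih k hkl (by omega)) ?_
      by_cases h2 : 2*l+2 ≤ n
      · exact Nat.choose_le_succ_of_lt_half_left (by omega)
      · have hn : n = 2*l+1 := by omega
        have h3 : Nat.choose n (l+1) = Nat.choose n (n - (l+1)) := (Nat.choose_symm (by omega)).symm
        rw [h3]
        have : n - (l+1) = l := by omega
        rw [this]

theorem choose_anti (n a b : ℕ) (hab : a ≤ b) (h : n + 1 ≤ a + b) :
    Nat.choose n b ≤ Nat.choose n a := by
  by_cases hb : n < b
  · rw [Nat.choose_eq_zero_of_lt hb]; exact Nat.zero_le _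
  · push_neg at hb
    rw [← Nat.choose_symm hb]
    by_cases ha : 2*a ≤ n
    · exact choose_inc n a (n-b) (by omega) (by omega)
    · rw [← Nat.choose_symm (le_trans hab hb)]
      exact choose_inc n (n-a) (n-b) (by omega) (by omega)

/-- the level value of p at count k -/
noncomputable def gg (N : ℕ) (p : (Fin N → Bool) → ℝ) (k : ℕ) : ℝ :=
  p (fun i : Fin N => decide (i.val < k))

theorem cnt_le {N : ℕ} (y : Fin N → Bool) : cnt y ≤ N := by
  unfold cnt
  calc (univ.filter fun i => y i = true).card ≤ (univ : Finset (Fin N)).card :=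
        Finset.card_filter_le _ _
    _ = N := by simp

theorem cnt_indic {N k : ℕ} (hk : k ≤ N) : cnt (fun i : Fin N => decide (i.val < k)) = k := by
  unfold cnt
  rw [Finset.card_eq_of_bijective (n := k) (f := fun j hj => (⟨j, by omega⟩ : Fin N))]
  · intro a ha
    simp only [mem_filter, mem_univ, true_and, decide_eq_true_eq] at ha
    exact ⟨a.val, ha, Fin.ext rfl⟩
  · intro j hj; simp only [mem_filter, mem_univ, true_and, decide_eq_true_eq]; exact hj
  · intro i j hi hj hij
    exact congrArg Fin.val hij

theorem p_eq_gg {N : ℕ} (p : (Fin N → Bool) → ℝ)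
    (hexch : ∀ σ : Equiv.Perm (Fin N), ∀ y : Fin N → Bool, p (y ∘ σ) = p y)
    (y : Fin N → Bool) : p y = gg N p (cnt y) :=
  exch_const p hexch ((cnt_indic (cnt_le y)).symm)

theorem pref_zero_eq {N : ℕ} (p : (Fin N → Bool) → ℝ)
    (hexch : ∀ σ : Equiv.Perm (Fin N), ∀ y : Fin N → Bool, p (y ∘ σ) = p y)
    {n : ℕ} (hn : n ≤ N) :
    pref N p hn (fun _ => false) =
      ∑ k ∈ range (N+1), ((N - n).choose k : ℝ) * gg N p k := by
  unfold pref
  have step1 : ∀ y : Fin N → Bool,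
      (if (∀ i : Fin n, y (Fin.castLE hn i) = false) then p y else 0) =
      ∑ k ∈ range (N+1),
        (if ((∀ i : Fin n, y (Fin.castLE hn i) = false) ∧ cnt y = k) then gg N p k else 0) := by
    intro y
    by_cases hA : ∀ i : Fin n, y (Fin.castLE hn i) = false
    · rw [if_pos hA]
      have hiff : ∀ k, (((∀ i : Fin n, y (Fin.castLE hn i) = false)) ∧ cnt y = k) ↔ cnt y = k :=
        fun k => and_iff_right hA
      simp only [hiff]
      rw [Finset.sum_ite_eq (range (N+1)) (cnt y) (gg N p)]
      rw [if_pos (by rw [mem_range]; exact Nat.lt_succ_of_le (cnt_le y))]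
      exact p_eq_gg p hexch y
    · rw [if_neg hA]
      symm
      apply Finset.sum_eq_zero
      intro k _
      rw [if_neg]
      exact fun h => hA h.1
  rw [Finset.sum_congr rfl (fun y _ => step1 y), Finset.sum_comm]
  refine Finset.sum_congr rfl (fun k _ => ?_)
  rw [← Finset.sum_filter, Finset.sum_const, card_count N n k hn, nsmul_eq_mul]

theorem gam_eq_gg {N : ℕ} (p : (Fin N → Bool) → ℝ)
    (hexch : ∀ σ : Equiv.Perm (Fin N), ∀ y : Fin N → Bool, p (y ∘ σ) = p y)
    (k : ℕ) : gam N p k = (N.choose k : ℝ) * gg N p k := by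
  unfold gam
  have step1 : ∀ y : Fin N → Bool,
      (if cnt y = k then p y else 0) = (if cnt y = k then gg N p k else 0) := by
    intro y
    by_cases h : cnt y = k
    · rw [if_pos h, if_pos h, p_eq_gg p hexch, h]
    · rw [if_neg h, if_neg h]
  rw [Finset.sum_congr rfl (fun y _ => step1 y), ← Finset.sum_filter, Finset.sum_const,
    nsmul_eq_mul]
  congr 2
  have := card_count N 0 k (Nat.zero_le N)
  rw [Nat.sub_zero] at this
  rw [← this]
  congr 1
  ext y
  simp [Fin.elim0, IsEmpty.forall_iff]

/-- Statement: if γ is tighter than the Binomial(N,1/2), then for the first-success time M,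
P(M = m | M ≥ m) > 1/2 for every m = 2,...,N. -/
theorem tighter_first_success (N : ℕ) (p : (Fin N → Bool) → ℝ)
    (hnn : ∀ y, 0 ≤ p y) (hsum : ∑ y, p y = 1)
    (hexch : ∀ σ : Equiv.Perm (Fin N), ∀ y : Fin N → Bool, p (y ∘ σ) = p y)
    (hsymm : ∀ i ≤ N, gam N p i = gam N p (N - i))
    (htighter : ∀ i : ℕ, 1 ≤ i → i ≤ N / 2 →
      gam N p i / gam N p (i - 1) > ((N - i + 1 : ℕ) : ℝ) / (i : ℝ)) :
    ∀ m : ℕ, ∀ _h2 : 2 ≤ m, ∀ _hN : m ≤ N,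
      0 < pref N p (show m - 1 ≤ N by omega) (fun _ => false) →
      pref N p (show m - 1 + 1 ≤ N by omega)
          (Fin.snoc (fun _ => false : Fin (m - 1) → Bool) true) /
        pref N p (show m - 1 ≤ N by omega) (fun _ => false) > 1 / 2 := by
  intro m hm2 hmN hpos
  set g : ℕ → ℝ := gg N p with hg
  -- basic properties of g
  have hg0 : ∀ k, 0 ≤ g k := fun k => hnn _
  have hgam : ∀ k, gam N p k = (N.choose k : ℝ) * g k := gam_eq_gg p hexch
  have hgsym : ∀ j ≤ N, g j = g (N - j) := by
    intro j hj
    have h1 := hsymm j hj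
    rw [hgam, hgam, Nat.choose_symm hj] at h1
    have hpos' : (0:ℝ) < (N.choose j : ℝ) := by
      exact_mod_cast Nat.choose_pos hj
    exact mul_left_cancel₀ (ne_of_gt hpos') h1
  have hginc : ∀ i : ℕ, 1 ≤ i → i ≤ N / 2 → g (i-1) < g i := by
    intro i h1 h2
    have ht := htighter i h1 h2
    have hiN : i ≤ N := le_trans h2 (Nat.div_le_self N 2)
    have hr : (0:ℝ) < ((N - i + 1 : ℕ) : ℝ) / (i : ℝ) := by
      apply div_pos
      · exact_mod_cast Nat.succ_pos (N - i)
      · exact_mod_cast h1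
    have hBne : gam N p (i-1) ≠ 0 := by
      intro h0
      rw [h0, div_zero] at ht
      linarith
    have hBnn : 0 ≤ gam N p (i-1) := by
      unfold gam
      apply Finset.sum_nonneg
      intro y _
      by_cases h : cnt y = i - 1
      · rw [if_pos h]; exact hnn y
      · rw [if_neg h]
    have hB : 0 < gam N p (i-1) := lt_of_le_of_ne hBnn (Ne.symm hBne)
    have hii : (0:ℝ) < (i:ℝ) := by exact_mod_cast h1
    have hmul : gam N p i * (i:ℝ) > ((N - i + 1 : ℕ) : ℝ) * gam N p (i-1) := by
      rw [gt_iff_lt, div_lt_div_iff₀ hii hB] at ht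
      linarith
    -- choose identity
    have hcid : (N.choose i : ℝ) * (i:ℝ) = (N.choose (i-1) : ℝ) * ((N - i + 1 : ℕ) : ℝ) := by
      have := Nat.choose_succ_right_eq N (i-1)
      have hi1 : i - 1 + 1 = i := by omega
      rw [hi1] at this
      have hsub : N - (i-1) = N - i + 1 := by omega
      rw [hsub] at this
      exact_mod_cast congrArg (fun x : ℕ => (x:ℝ)) this
    rw [hgam, hgam] at hmul
    have hcp : (0:ℝ) < (N.choose i : ℝ) := by exact_mod_cast Nat.choose_pos hiN
    have hcp' : (0:ℝ) < (N.choose (i-1) : ℝ) := by exact_mod_cast Nat.choose_pos (by omega)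
    have hrr : (0:ℝ) < ((N - i + 1 : ℕ) : ℝ) := by exact_mod_cast Nat.succ_pos (N - i)
    by_contra hle
    push_neg at hle
    have h5 : (N.choose i : ℝ) * (i:ℝ) * g i ≤ (N.choose i:ℝ)*(i:ℝ)*g (i-1) :=
      mul_le_mul_of_nonneg_left hle (le_of_lt (mul_pos hcp hii))
    have h6 : (N.choose i:ℝ)*(i:ℝ)*g (i-1) = ((N - i + 1:ℕ):ℝ)*((N.choose (i-1):ℝ)*g (i-1)) := by
      rw [hcid]; ring
    have h7 : (N.choose i : ℝ) * g i * (i:ℝ) = (N.choose i : ℝ) * (i:ℝ) * g i := by ring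
    rw [h7] at hmul
    linarith
  -- abbreviations
  have hM1 : m - 1 + 1 ≤ N := by omega
  have hM : m - 1 ≤ N := by omega
  set M := m - 1 with hMdef
  have hN2 : 2 ≤ N := le_trans hm2 hmN
  set n : ℕ := N - (M + 1) with hndef
  have hnN : n ≤ N - 2 := by omega
  have hNM1 : N - M = n + 1 := by omega
  -- pref identities
  have hPM : pref N p hM (fun _ => false) = ∑ k ∈ range (N+1), ((n+1).choose k : ℝ) * g k := by
    rw [pref_zero_eq p hexch hM, hNM1]
  have hPM1 : pref N p hM1 (fun _ => false) = ∑ k ∈ range (N+1), (n.choose k : ℝ) * g k := by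
    rw [pref_zero_eq p hexch hM1, hndef]
  -- snoc decomposition
  have hsnoc : pref N p hM1 (Fin.snoc (fun _ => false : Fin M → Bool) true) =
      pref N p hM (fun _ => false) - pref N p hM1 (fun _ => false) := by
    rw [eq_sub_iff_add_eq]
    unfold pref
    rw [← Finset.sum_add_distrib]
    refine Finset.sum_congr rfl (fun y _ => ?_)
    have hl : Fin.castLE hM1 (Fin.last M) = (⟨M, by omega⟩ : Fin N) := Fin.ext rfl
    have hA1 : (∀ i : Fin (M+1), y (Fin.castLE hM1 i) =
        (Fin.snoc (fun _ => false : Fin M → Bool) true : Fin (M+1) → Bool) i) ↔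
        ((∀ i : Fin M, y (Fin.castLE hM i) = false) ∧ y (Fin.castLE hM1 (Fin.last M)) = true) := by
      constructor
      · intro h
        refine ⟨fun i => ?_, ?_⟩
        · have h2 := h (Fin.castSucc i)
          rw [Fin.snoc_castSucc] at h2
          have : Fin.castLE hM1 (Fin.castSucc i) = Fin.castLE hM i := Fin.ext rfl
          rwa [this] at h2
        · have h2 := h (Fin.last M)
          rwa [Fin.snoc_last] at h2
      · rintro ⟨h1, h2⟩ i
        by_cases hi : i.val < M
        · have heq : i = Fin.castSucc (⟨i.val, hi⟩ : Fin M) := Fin.ext rfl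
          rw [heq, Fin.snoc_castSucc]
          have : Fin.castLE hM1 (Fin.castSucc (⟨i.val, hi⟩ : Fin M)) =
              Fin.castLE hM (⟨i.val, hi⟩ : Fin M) := Fin.ext rfl
          rw [this]
          exact h1 _
        · have heq : i = Fin.last M := Fin.ext (by have := i.isLt; simp only [Fin.val_last]; omega)
          rw [heq, Fin.snoc_last]
          exact h2
    have hA2 : (∀ i : Fin (M+1), y (Fin.castLE hM1 i) = false) ↔
        ((∀ i : Fin M, y (Fin.castLE hM i) = false) ∧
          y (Fin.castLE hM1 (Fin.last M)) = false) := by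
      constructor
      · intro h
        refine ⟨fun i => ?_, h (Fin.last M)⟩
        have h2 := h (Fin.castSucc i)
        have : Fin.castLE hM1 (Fin.castSucc i) = Fin.castLE hM i := Fin.ext rfl
        rwa [this] at h2
      · rintro ⟨h1, h2⟩ i
        by_cases hi : i.val < M
        · have heq : i = Fin.castSucc (⟨i.val, hi⟩ : Fin M) := Fin.ext rfl
          rw [heq]
          have : Fin.castLE hM1 (Fin.castSucc (⟨i.val, hi⟩ : Fin M)) =
              Fin.castLE hM (⟨i.val, hi⟩ : Fin M) := Fin.ext rfl
          rw [this]
          exact h1 _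
        · have heq : i = Fin.last M := Fin.ext (by have := i.isLt; simp only [Fin.val_last]; omega)
          rw [heq]
          exact h2
    simp only [hA1, hA2]
    by_cases hc : ∀ i : Fin M, y (Fin.castLE hM i) = false
    · by_cases hb : y (Fin.castLE hM1 (Fin.last M)) = true
      · simp [hc, hb]
      · simp only [Bool.not_eq_true] at hb
        simp [hc, hb]
    · simp [hc]
  -- key inequality
  have hkey : pref N p hM (fun _ => false) > 2 * pref N p hM1 (fun _ => false) := by
    rw [hPM, hPM1]
    rw [gt_iff_lt, ← sub_pos]
    have hdiff : (∑ k ∈ range (N+1), ((n+1).choose k : ℝ) * g k) -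
        2 * (∑ k ∈ range (N+1), (n.choose k : ℝ) * g k) =
        ∑ j ∈ range N, (n.choose j : ℝ) * (g (j+1) - g j) := by
      have e1 : (∑ k ∈ range (N+1), ((n+1).choose k : ℝ) * g k) -
          (∑ k ∈ range (N+1), (n.choose k : ℝ) * g k) =
          ∑ k ∈ range (N+1), (((n+1).choose k : ℝ) - (n.choose k : ℝ)) * g k := by
        rw [← Finset.sum_sub_distrib]
        refine Finset.sum_congr rfl (fun k _ => ?_)
        ring
      have e2 : ∑ k ∈ range (N+1), (((n+1).choose k : ℝ) - (n.choose k : ℝ)) * g k =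
          ∑ j ∈ range N, (n.choose j : ℝ) * g (j+1) := by
        rw [Finset.sum_range_succ']
        have hz : (((n+1).choose 0 : ℝ) - (n.choose 0 : ℝ)) * g 0 = 0 := by
          simp
        rw [hz, add_zero]
        refine Finset.sum_congr rfl (fun j _ => ?_)
        have : (n+1).choose (j+1) = n.choose j + n.choose (j+1) := Nat.choose_succ_succ n j
        rw [this]
        push_cast
        ring
      have e3 : (∑ k ∈ range (N+1), (n.choose k : ℝ) * g k) =
          ∑ j ∈ range N, (n.choose j : ℝ) * g j := by
        rw [Finset.sum_range_succ]
        have : n.choose N = 0 := Nat.choose_eq_zero_of_lt (by omega)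
        rw [this]
        simp
      have : (∑ k ∈ range (N+1), ((n+1).choose k : ℝ) * g k) -
          2 * (∑ k ∈ range (N+1), (n.choose k : ℝ) * g k) =
          ((∑ k ∈ range (N+1), ((n+1).choose k : ℝ) * g k) -
          (∑ k ∈ range (N+1), (n.choose k : ℝ) * g k)) -
          (∑ k ∈ range (N+1), (n.choose k : ℝ) * g k) := by ring
      rw [this, e1, e2, e3, ← Finset.sum_sub_distrib]
      refine Finset.sum_congr rfl (fun j _ => ?_)
      ring
    rw [hdiff]
    -- reflection
    have hrefl : ∑ j ∈ range N, (n.choose j : ℝ) * (g (j+1) - g j) =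
        ∑ j ∈ range N, (-(n.choose (N-1-j) : ℝ)) * (g (j+1) - g j) := by
      conv_lhs => rw [← Finset.sum_range_reflect (fun j => (n.choose j : ℝ) * (g (j+1) - g j)) N]
      refine Finset.sum_congr rfl (fun j hj => ?_)
      rw [mem_range] at hj
      have h1 : N - 1 - j + 1 = N - j := by omega
      have h2 : g (N - j) = g j := (hgsym j (by omega)).symm
      have h3 : g (N - 1 - j) = g (j+1) := by
        have : N - 1 - j = N - (j+1) := by omega
        rw [this]
        exact (hgsym (j+1) (by omega)).symm
      rw [h1, h2, h3]
      ring
    have h2S : 0 < ∑ j ∈ range N, ((n.choose j : ℝ) - (n.choose (N-1-j) : ℝ)) * (g (j+1) - g j) := by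
      apply Finset.sum_pos'
      · intro j hj
        rw [mem_range] at hj
        rcases lt_trichotomy (2*j+1) N with hlt | heq | hgt
        · have hd : 0 < g (j+1) - g j := by
            have := hginc (j+1) (by omega) (by omega)
            simp only [Nat.add_sub_cancel] at this
            linarith
          have hcc : (n.choose (N-1-j) : ℝ) ≤ (n.choose j : ℝ) := by
            exact_mod_cast choose_anti n j (N-1-j) (by omega) (by omega)
          nlinarith
        · have : N - 1 - j = j := by omega
          rw [this]
          simp
        · have hd : g (j+1) - g j ≤ 0 := by
            have hj' : 2*(N-1-j)+1 < N := by omega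
            have hd' : 0 < g (N-1-j+1) - g (N-1-j) := by
              have := hginc (N-1-j+1) (by omega) (by omega)
              simp only [Nat.add_sub_cancel] at this
              linarith
            have h1 : N - 1 - j + 1 = N - j := by omega
            have h2 : g (N - j) = g j := (hgsym j (by omega)).symm
            have h3 : g (N - 1 - j) = g (j+1) := by
              have : N - 1 - j = N - (j+1) := by omega
              rw [this]
              exact (hgsym (j+1) (by omega)).symm
            rw [h1, h2, h3] at hd'
            linarith
          have hcc : (n.choose j : ℝ) ≤ (n.choose (N-1-j) : ℝ) := by
            exact_mod_cast choose_anti n (N-1-j) j (by omega) (by omega)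
          nlinarith
      · refine ⟨0, by rw [mem_range]; omega, ?_⟩
        have hd : 0 < g 1 - g 0 := by
          have := hginc 1 (by omega) (by omega)
          simp only [Nat.sub_self] at this
          linarith
        have hch : (n.choose (N-1) : ℝ) = 0 := by
          norm_cast
          exact Nat.choose_eq_zero_of_lt (by omega)
        simp only [Nat.sub_zero, hch, Nat.choose_zero_right, Nat.cast_one]
        nlinarith [hd]
    have : (0:ℝ) < 2 * ∑ j ∈ range N, (n.choose j : ℝ) * (g (j+1) - g j) := by
      have hsum2 : 2 * ∑ j ∈ range N, (n.choose j : ℝ) * (g (j+1) - g j) =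
          (∑ j ∈ range N, (n.choose j : ℝ) * (g (j+1) - g j)) +
          (∑ j ∈ range N, (-(n.choose (N-1-j) : ℝ)) * (g (j+1) - g j)) := by
        rw [← hrefl]; ring
      rw [hsum2, ← Finset.sum_add_distrib]
      have : ∑ j ∈ range N, ((n.choose j : ℝ) * (g (j+1) - g j) +
          (-(n.choose (N-1-j) : ℝ)) * (g (j+1) - g j)) =
          ∑ j ∈ range N, ((n.choose j : ℝ) - (n.choose (N-1-j) : ℝ)) * (g (j+1) - g j) := by
        refine Finset.sum_congr rfl (fun j _ => ?_)
        ring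
      rw [this]
      exact h2S
    linarith
  -- conclude
  have hfin := hsnoc
  rw [gt_iff_lt, lt_div_iff₀ hpos, hfin]
  have hP1 := hkey
  linarith
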